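/- Let f : ℝ → ℝ be differentiable, positive, and decreasing on [x_1,∞) with f'(x) < 0 there, and suppose −f'(x)/f(x) ≥ k_5 > 0 for all x ≥ x_1. Let (x_n)_{n≥1} be an increasing sequence in [x_1,∞) with x_n → +∞ satisfying x_{n+1} − x_n ≤ (2/k_2)·f(x_n) for some constant k_2 > 0. Then Σ_{n≥1} (−f'(x_n)) = +∞. -/

import Mathlib

open Real Filter Set

/-- Conclusion of case (A1): if `−f'/f ≥ k₅ > 0` on `[x₁,∞)` and the increasing abscissas
`x_n → +∞` satisfy the step bound `x_{n+1} − x_n ≤ (2/k₂)·f(x_n)`, then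
`Σ (−f'(x_n)) = +∞`. -/
theorem A1_series_diverges (f : ℝ → ℝ) (x₁ k₂ k₅ : ℝ) (x : ℕ → ℝ)
    (hdiff : ∀ y, x₁ ≤ y → DifferentiableAt ℝ f y)
    (hpos : ∀ y, x₁ ≤ y → 0 < f y)
    (hmono : AntitoneOn f (Set.Ici x₁))
    (hderiv_neg : ∀ y, x₁ ≤ y → deriv f y < 0)
    (hk₅ : 0 < k₅)
    (hg : ∀ y, x₁ ≤ y → k₅ ≤ -(deriv f y) / f y)
    (hx : ∀ n, x n ∈ Set.Ici x₁)
    (hxmono : StrictMono x)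
    (hxlim : Tendsto x atTop atTop)
    (hk₂ : 0 < k₂)
    (hstep : ∀ n, x (n + 1) - x n ≤ (2 / k₂) * f (x n)) :
    Tendsto (fun N => ∑ n ∈ Finset.range N, -(deriv f (x n))) atTop atTop := by
  have key : ∀ n, (k₅ * k₂ / 2) * (x (n+1) - x n) ≤ -(deriv f (x n)) := by
    intro n
    have hxn := hx n
    have hfpos := hpos (x n) hxn
    have h1 : k₅ * f (x n) ≤ -(deriv f (x n)) := by
      have := hg (x n) hxn
      calc k₅ * f (x n) ≤ (-(deriv f (x n)) / f (x n)) * f (x n) := by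
            exact mul_le_mul_of_nonneg_right this hfpos.le
        _ = -(deriv f (x n)) := by field_simp
    have h2 : (k₂ / 2) * (x (n+1) - x n) ≤ f (x n) := by
      have := hstep n
      have := mul_le_mul_of_nonneg_left this (by positivity : (0:ℝ) ≤ k₂ / 2)
      calc (k₂ / 2) * (x (n+1) - x n) ≤ (k₂ / 2) * ((2 / k₂) * f (x n)) := this
        _ = f (x n) := by field_simp
    calc (k₅ * k₂ / 2) * (x (n+1) - x n) = k₅ * ((k₂ / 2) * (x (n+1) - x n)) := by ring
      _ ≤ k₅ * f (x n) := by exact mul_le_mul_of_nonneg_left h2 hk₅.le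
      _ ≤ -(deriv f (x n)) := h1
  have hsum : ∀ N, (k₅ * k₂ / 2) * (x N - x 0) ≤ ∑ n ∈ Finset.range N, -(deriv f (x n)) := by
    intro N
    have : ∑ n ∈ Finset.range N, (k₅ * k₂ / 2) * (x (n+1) - x n) ≤
        ∑ n ∈ Finset.range N, -(deriv f (x n)) :=
      Finset.sum_le_sum fun n _ => key n
    calc (k₅ * k₂ / 2) * (x N - x 0)
        = ∑ n ∈ Finset.range N, (k₅ * k₂ / 2) * (x (n+1) - x n) := by
          rw [← Finset.mul_sum, Finset.sum_range_sub]
      _ ≤ _ := this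
  have hlim : Tendsto (fun N => (k₅ * k₂ / 2) * (x N - x 0)) atTop atTop := by
    apply Tendsto.const_mul_atTop (by positivity)
    exact hxlim.atTop_add tendsto_const_nhds
  exact tendsto_atTop_mono hsum hlim
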